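/- Let r_t ∈ [0, 1/2 − γ] for all t ≥ 0 with γ = 1/2 − ε > 0 (i.e., each weak classifier has risk at most ε < 1/2 on its reweighted distribution). Define Z-products as in AdaBoost: the zero-one risk of the aggregated classifier h_T = Σ_{t<T} η_t h̃_t with optimal step sizes η_t = (1/2)log(1/r_t − 1) satisfies R_D(h_T) ≤ Π_{t<T} 2√(r_t(1−r_t)) ≤ Π_{t<T} √(1 − 4γ²) ≤ exp(−2γ²T) = exp(−(1−2ε)²T/2). -/

import Mathlib

lemma adaboost_sqrt_bound {r γ : ℝ} (hr0 : 0 < r) (hrub : r ≤ 1/2 - γ) (hγ0 : 0 < γ) :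
    2 * Real.sqrt (r * (1 - r)) ≤ Real.exp (-(2 * γ^2)) := by
  have hle : 4 * (r * (1-r)) ≤ 1 - 4*γ^2 := by nlinarith
  have h2 : Real.sqrt (4 * (r*(1-r))) = 2 * Real.sqrt (r*(1-r)) := by
    rw [Real.sqrt_mul (by norm_num : (0:ℝ) ≤ 4)]
    congr 1
    rw [show (4:ℝ) = 2^2 by norm_num]
    exact Real.sqrt_sq (by norm_num)
  rw [← h2]
  have hexp : 1 - 4*γ^2 ≤ Real.exp (-(4*γ^2)) := by
    have := Real.add_one_le_exp (-(4*γ^2)); linarith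
  calc Real.sqrt (4*(r*(1-r))) ≤ Real.sqrt (Real.exp (-(4*γ^2))) := by
        apply Real.sqrt_le_sqrt; linarith
    _ = Real.exp (-(2*γ^2)) := by
        rw [show Real.exp (-(4*γ^2)) = (Real.exp (-(2*γ^2)))^2 by
          rw [← Real.exp_nat_mul]; congr 1; push_cast; ring]
        exact Real.sqrt_sq (Real.exp_nonneg _)

open Classical in
/-- AdaBoost-style convergence: if every weak classifier has risk
`r t ≤ 1/2 − γ = ε < 1/2` on the exponentially reweighted distribution, then after `T`
rounds with optimal step sizes `η t = (1/2)log(1/r t − 1)` the zero-one risk of the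
aggregated classifier satisfies `R_D(h_T) ≤ exp(−(1−2ε)²T/2)`. -/
theorem adaboost_risk_bound {X : Type*} [Fintype X]
    (D : X → ℝ) (hDnn : ∀ x, 0 ≤ D x) (hDsum : ∑ x, D x = 1)
    (f : X → ℝ) (hf : ∀ x, f x = 1 ∨ f x = -1)
    (ε γ : ℝ) (hγ : γ = 1 / 2 - ε) (hγ0 : 0 < γ)
    (T : ℕ)
    (htil : ℕ → X → ℝ) (htilpm : ∀ t x, htil t x = 1 ∨ htil t x = -1)
    (h : ℕ → X → ℝ) (hinit : ∀ x, h 0 x = 0)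
    (r η : ℕ → ℝ)
    (hr : ∀ t, r t =
      (∑ x ∈ Finset.univ.filter (fun x => htil t x ≠ f x),
          D x * Real.exp (-(h t x * f x)))
        / ∑ x, D x * Real.exp (-(h t x * f x)))
    (hrpos : ∀ t, 0 < r t) (hrub : ∀ t, r t ≤ 1 / 2 - γ)
    (hη : ∀ t, η t = (1 / 2) * Real.log (1 / r t - 1))
    (hrec : ∀ t x, h (t + 1) x = h t x + η t * htil t x) :
    ∑ x ∈ Finset.univ.filter (fun x => h T x * f x ≤ 0), D x
      ≤ Real.exp (-(1 - 2 * ε) ^ 2 * (T : ℝ) / 2) := by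
  set L : ℕ → ℝ := fun t => ∑ x, D x * Real.exp (-(h t x * f x)) with hLdef
  have hex : ∃ x : X, 0 < D x := by
    by_contra hc
    push_neg at hc
    have hz : ∀ x, D x = 0 := fun x => le_antisymm (hc x) (hDnn x)
    rw [Finset.sum_congr rfl (fun x _ => hz x)] at hDsum
    simp at hDsum
  have hLpos : ∀ t, 0 < L t := by
    intro t
    obtain ⟨x0, hx0⟩ := hex
    exact Finset.sum_pos' (fun x _ => mul_nonneg (hDnn x) (Real.exp_nonneg _))
      ⟨x0, Finset.mem_univ x0, mul_pos hx0 (Real.exp_pos _)⟩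
  have hf2 : ∀ x, f x * f x = 1 := fun x => by rcases hf x with hfx|hfx <;> rw [hfx] <;> norm_num
  have hstep : ∀ t, L (t+1) = 2 * Real.sqrt (r t * (1 - r t)) * L t := by
    intro t
    have hrt0 := hrpos t
    have hrt1 : r t < 1/2 := lt_of_le_of_lt (hrub t) (by linarith)
    have h1r : 0 < 1 - r t := by linarith
    have hepos : Real.exp (η t) = Real.sqrt ((1 - r t)/r t) := by
      rw [hη t, show 1 / r t - 1 = (1 - r t)/ r t by field_simp,
        Real.sqrt_eq_rpow, Real.rpow_def_of_pos (by positivity)]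
      ring_nf
    have heneg : Real.exp (-η t) = Real.sqrt (r t/(1 - r t)) := by
      rw [Real.exp_neg, hepos, ← Real.sqrt_inv]
      congr 1
      field_simp
    have key : ∀ x : X, D x * Real.exp (-(h (t+1) x * f x)) =
        (if htil t x = f x then Real.sqrt (r t/(1-r t)) else Real.sqrt ((1-r t)/r t))
          * (D x * Real.exp (-(h t x * f x))) := by
      intro x
      rw [hrec t x,
        show -((h t x + η t * htil t x) * f x)
            = -(h t x * f x) + -(η t * (htil t x * f x)) by ring,
        Real.exp_add]
      by_cases hx : htil t x = f x
      · rw [if_pos hx, hx, show -(η t * (f x * f x)) = -η t by rw [hf2 x]; ring, heneg]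
        ring
      · have hht : htil t x * f x = -1 := by
          rcases htilpm t x with h1|h1 <;> rcases hf x with h2|h2 <;>
            rw [h1, h2] <;> [skip; norm_num; norm_num; skip] <;>
            (exfalso; apply hx; rw [h1, h2]) <;> norm_num
        rw [if_neg hx, hht, show -(η t * (-1:ℝ)) = η t by ring, hepos]
        ring
    have hsplit :
        L (t+1) = Real.sqrt ((1-r t)/r t) *
            (∑ x ∈ Finset.univ.filter (fun x => htil t x ≠ f x),
               D x * Real.exp (-(h t x * f x)))
          + Real.sqrt (r t/(1-r t)) *
            (∑ x ∈ Finset.univ.filter (fun x => ¬ htil t x ≠ f x),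
               D x * Real.exp (-(h t x * f x))) := by
      have : L (t+1) = ∑ x, (if htil t x = f x then Real.sqrt (r t/(1-r t))
          else Real.sqrt ((1-r t)/r t)) * (D x * Real.exp (-(h t x * f x))) :=
        Finset.sum_congr rfl (fun x _ => key x)
      rw [this, ← Finset.sum_filter_add_sum_filter_not Finset.univ (fun x => htil t x ≠ f x),
        Finset.mul_sum, Finset.mul_sum]
      congr 1
      · refine Finset.sum_congr rfl (fun x hx => ?_)
        rw [Finset.mem_filter] at hx
        rw [if_neg hx.2]
      · refine Finset.sum_congr rfl (fun x hx => ?_)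
        rw [Finset.mem_filter] at hx
        rw [if_pos (not_not.mp hx.2)]
    have hW : (∑ x ∈ Finset.univ.filter (fun x => htil t x ≠ f x),
        D x * Real.exp (-(h t x * f x))) = r t * L t := by
      have := hr t
      rw [eq_div_iff (ne_of_gt (hLpos t))] at this
      linarith [this]
    have hC : (∑ x ∈ Finset.univ.filter (fun x => ¬ htil t x ≠ f x),
        D x * Real.exp (-(h t x * f x))) = (1 - r t) * L t := by
      have hs := Finset.sum_filter_add_sum_filter_not Finset.univ
        (fun x => htil t x ≠ f x) (fun x => D x * Real.exp (-(h t x * f x)))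
      rw [hW] at hs
      have : L t = r t * L t + _ := hs.symm
      linarith [hs]
    rw [hsplit, hW, hC]
    have e1 : Real.sqrt ((1-r t)/r t) * r t = Real.sqrt (r t*(1-r t)) := by
      rw [show r t * (1 - r t) = (1-r t)/r t * (r t)^2 by field_simp,
        Real.sqrt_mul (by positivity), Real.sqrt_sq hrt0.le]
    have e2 : Real.sqrt (r t/(1-r t)) * (1-r t) = Real.sqrt (r t*(1-r t)) := by
      rw [show r t * (1 - r t) = r t/(1-r t) * (1-r t)^2 by field_simp,
        Real.sqrt_mul (by positivity), Real.sqrt_sq h1r.le]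
    nlinarith [e1, e2, hLpos t]
  have hL0 : L 0 = 1 := by
    have hterm : ∀ x : X, D x * Real.exp (-(h 0 x * f x)) = D x := by
      intro x; rw [hinit x]; simp
    simp only [hLdef]
    rw [Finset.sum_congr rfl (fun x _ => hterm x)]
    exact hDsum
  have hLT : ∀ t : ℕ, L t ≤ Real.exp (-(2*γ^2)) ^ t := by
    intro t
    induction t with
    | zero => simp [hL0]
    | succ n ih =>
      rw [hstep n, pow_succ]
      have hb := adaboost_sqrt_bound (hrpos n) (hrub n) hγ0
      calc 2 * Real.sqrt (r n * (1 - r n)) * L n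
          ≤ Real.exp (-(2*γ^2)) * L n :=
            mul_le_mul_of_nonneg_right hb (hLpos n).le
        _ ≤ Real.exp (-(2*γ^2)) * Real.exp (-(2*γ^2)) ^ n :=
            mul_le_mul_of_nonneg_left ih (Real.exp_nonneg _)
        _ = Real.exp (-(2*γ^2)) ^ n * Real.exp (-(2*γ^2)) := by ring
  have hrisk : (∑ x ∈ Finset.univ.filter (fun x => h T x * f x ≤ 0), D x) ≤ L T := by
    calc (∑ x ∈ Finset.univ.filter (fun x => h T x * f x ≤ 0), D x)
        ≤ ∑ x ∈ Finset.univ.filter (fun x => h T x * f x ≤ 0),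
            D x * Real.exp (-(h T x * f x)) := by
          refine Finset.sum_le_sum (fun x hx => ?_)
          rw [Finset.mem_filter] at hx
          have : (1:ℝ) ≤ Real.exp (-(h T x * f x)) := by
            rw [show (1:ℝ) = Real.exp 0 by simp]
            exact Real.exp_le_exp.mpr (by linarith [hx.2])
          nlinarith [hDnn x]
      _ ≤ L T := by
          refine Finset.sum_le_sum_of_subset_of_nonneg (Finset.filter_subset _ _)
            (fun x _ _ => mul_nonneg (hDnn x) (Real.exp_nonneg _))
  have hfin : Real.exp (-(2*γ^2)) ^ T = Real.exp (-(1 - 2 * ε) ^ 2 * (T : ℝ) / 2) := by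
    rw [← Real.exp_nat_mul]
    congr 1
    rw [hγ]
    ring
  linarith [hrisk, hLT T, hfin.le, hfin.ge]
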